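/- Let δ > 0 and let 2 < α₁ < α₂ be real numbers. For i = 1, 2 let x*ᵢ > 0 be the unique positive zero of the function x ↦ (αᵢ/2)·(x/δ) - (1 + x/δ)·ln(1 + x/δ). Then x*₁ < x*₂. -/

import Mathlib

open Real Set

lemma g_hasDerivAt (t : ℝ) (ht : 0 < t) :
    HasDerivAt (fun s => (1 + s) * Real.log (1 + s) / s)
      (((Real.log (1 + t) + 1) * t - (1 + t) * Real.log (1 + t) * 1) / t ^ 2) t := by
  have h1 : (0:ℝ) < 1 + t := by linarith
  have hlog : HasDerivAt (fun s : ℝ => Real.log (1 + s)) (1 / (1 + t)) t := by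
    have := (Real.hasDerivAt_log (ne_of_gt h1)).comp t
      ((hasDerivAt_id t).const_add 1)
    simpa [one_div, Function.comp_def] using this
  have hN : HasDerivAt (fun s : ℝ => (1 + s) * Real.log (1 + s))
      (Real.log (1 + t) + 1) t := by
    have := ((hasDerivAt_id t).const_add 1).mul hlog
    refine this.congr_deriv ?_
    simp only [id]
    rw [mul_one_div_cancel h1.ne']
    ring
  exact hN.div (hasDerivAt_id t) (ne_of_gt ht)

lemma g_strictMono : StrictMonoOn (fun s => (1 + s) * Real.log (1 + s) / s) (Set.Ioi 0) := by
  apply strictMonoOn_of_deriv_pos (convex_Ioi 0)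
  · intro t ht
    exact ((g_hasDerivAt t ht).continuousAt).continuousWithinAt
  · intro t ht
    rw [interior_Ioi] at ht
    have ht' : (0:ℝ) < t := ht
    rw [(g_hasDerivAt t ht').deriv]
    have h1 : (0:ℝ) < 1 + t := by linarith
    have hlt : Real.log (1 + t) < t := by
      have := Real.log_lt_sub_one_of_pos h1 (by linarith : (1:ℝ) + t ≠ 1)
      linarith
    have hnum : 0 < (Real.log (1 + t) + 1) * t - (1 + t) * Real.log (1 + t) * 1 := by
      nlinarith
    exact div_pos hnum (pow_pos ht' 2)

theorem stmt_6 (δ α₁ α₂ x₁ x₂ : ℝ) (hδ : 0 < δ) (hα₁ : 2 < α₁) (hα₁₂ : α₁ < α₂)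
    (hx₁ : 0 < x₁) (hx₂ : 0 < x₂)
    (h₁ : (α₁ / 2) * (x₁ / δ) - (1 + x₁ / δ) * Real.log (1 + x₁ / δ) = 0)
    (h₁u : ∀ x : ℝ, 0 < x →
      (α₁ / 2) * (x / δ) - (1 + x / δ) * Real.log (1 + x / δ) = 0 → x = x₁)
    (h₂ : (α₂ / 2) * (x₂ / δ) - (1 + x₂ / δ) * Real.log (1 + x₂ / δ) = 0)
    (h₂u : ∀ x : ℝ, 0 < x →
      (α₂ / 2) * (x / δ) - (1 + x / δ) * Real.log (1 + x / δ) = 0 → x = x₂) :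
    x₁ < x₂ := by
  set t₁ := x₁ / δ with ht₁def
  set t₂ := x₂ / δ with ht₂def
  have ht₁ : 0 < t₁ := div_pos hx₁ hδ
  have ht₂ : 0 < t₂ := div_pos hx₂ hδ
  have e₁ : (1 + t₁) * Real.log (1 + t₁) / t₁ = α₁ / 2 := by
    field_simp
    linarith [h₁]
  have e₂ : (1 + t₂) * Real.log (1 + t₂) / t₂ = α₂ / 2 := by
    field_simp
    linarith [h₂]
  have hg : (fun s => (1 + s) * Real.log (1 + s) / s) t₁
      < (fun s => (1 + s) * Real.log (1 + s) / s) t₂ := by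
    simp only [e₁, e₂]
    linarith
  have := (g_strictMono.lt_iff_lt (Set.mem_Ioi.mpr ht₁) (Set.mem_Ioi.mpr ht₂)).mp hg
  exact (div_lt_div_iff_of_pos_right hδ).mp this
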